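/- Asymptotic size of the SDL test on the null coordinates: suppose the empirical distribution of the triples (θ_{0,i}, θ̂ᵘ_i, (Σ⁻¹)_{ii})_{i≤p} converges weakly almost surely to the law of (Θ₀, Θ₀ + τ Υ^{1/2} Z, Υ) with Z ~ N(0,1) independent of (Θ₀,Υ), τ > 0, and Υ > 0 a.s., and suppose lim_p |S₀ᶜ(p)|/p = P(Θ₀ = 0) > 0. Define the test T_i = 1{ |θ̂ᵘ_i| / (τ [(Σ⁻¹)_{ii}]^{1/2}) ≥ Φ⁻¹(1−α/2) }. Then almost surely lim_{p→∞} (1/|S₀ᶜ(p)|) ∑_{i ∈ S₀ᶜ(p)} T_i = α. -/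

import Mathlib

open MeasureTheory ProbabilityTheory Filter

/-- The standard normal CDF. -/
noncomputable def Phi (x : ℝ) : ℝ :=
  ∫ t in Set.Iic x, Real.exp (-t ^ 2 / 2) / Real.sqrt (2 * Real.pi)

/-- The inverse of the standard normal CDF (on `(0,1)`). -/
noncomputable def PhiInv : ℝ → ℝ := Function.invFun Phi

/-- The function `G(α, u)` of the paper. -/
noncomputable def G (α u : ℝ) : ℝ :=
  2 - Phi (PhiInv (1 - α / 2) + u) - Phi (PhiInv (1 - α / 2) - u)

noncomputable def stdf (t : ℝ) : ℝ := Real.exp (-t ^ 2 / 2) / Real.sqrt (2 * Real.pi)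
lemma stdf_eq : stdf = gaussianPDFReal 0 1 := by
  ext t; simp [stdf, gaussianPDFReal, div_eq_inv_mul, mul_comm]
lemma stdf_nonneg (t : ℝ) : 0 ≤ stdf t := by rw [stdf_eq]; exact gaussianPDFReal_nonneg 0 1 t
lemma integrable_stdf : Integrable stdf := by rw [stdf_eq]; exact integrable_gaussianPDFReal 0 1
lemma integral_stdf : ∫ t, stdf t = 1 := by
  rw [stdf_eq]; exact integral_gaussianPDFReal_eq_one 0 one_ne_zero
lemma Phi_eq (x : ℝ) : Phi x = ∫ t in Set.Iic x, stdf t := rfl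
lemma gauss_apply (s : Set ℝ) :
    gaussianReal 0 1 s = ENNReal.ofReal (∫ t in s, stdf t) := by
  rw [gaussianReal_apply_eq_integral 0 one_ne_zero s, stdf_eq]

lemma Phi_neg (x : ℝ) : Phi (-x) = 1 - Phi x := by
  have heven : ∀ t : ℝ, stdf (-t) = stdf t := by intro t; simp [stdf]
  have h1 : ∫ t in Set.Iic (-x), stdf t = ∫ t in Set.Ioi x, stdf t := by
    rw [← integral_comp_neg_Ioi]
    simp_rw [heven]
  rw [Phi_eq, Phi_eq, h1, eq_sub_iff_add_eq, add_comm,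
    intervalIntegral.integral_Iic_add_Ioi integrable_stdf.integrableOn integrable_stdf.integrableOn,
    integral_stdf]

lemma Phi_zero : Phi 0 = 1 / 2 := by
  have := Phi_neg 0
  rw [neg_zero] at this
  linarith

lemma Phi_mono : Monotone Phi := by
  intro a b hab
  exact setIntegral_mono_set integrable_stdf.integrableOn
    (ae_of_all _ stdf_nonneg) (HasSubset.Subset.eventuallyLE (Set.Iic_subset_Iic.2 hab))

lemma Phi_toReal (x : ℝ) : Phi x = (gaussianReal 0 1 (Set.Iic x)).toReal := by
  rw [gauss_apply, ENNReal.toReal_ofReal, Phi_eq]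
  exact setIntegral_nonneg measurableSet_Iic fun t _ => stdf_nonneg t

lemma Phi_tendsto_one : Tendsto Phi atTop (nhds 1) := by
  have h := MeasureTheory.tendsto_measure_Iic_atTop (μ := gaussianReal 0 1)
  have h2 : Tendsto (fun x => (gaussianReal 0 1 (Set.Iic x)).toReal) atTop
      (nhds ((gaussianReal 0 1 Set.univ).toReal)) :=
    (ENNReal.tendsto_toReal (measure_ne_top _ _)).comp h
  rw [measure_univ, ENNReal.toReal_one] at h2
  refine h2.congr fun x => ?_
  rw [← Phi_toReal]

lemma Phi_continuous : Continuous Phi := by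
  have hL : LipschitzWith 1 Phi := by
    have key : ∀ a b : ℝ, a ≤ b → Phi b - Phi a ≤ b - a := by
      intro a b hab
      have hsplit : Phi b - Phi a = ∫ t in Set.Ioc a b, stdf t := by
        rw [Phi_eq b, ← Set.Iic_union_Ioc_eq_Iic hab,
          setIntegral_union (Set.Iic_disjoint_Ioc le_rfl) measurableSet_Ioc
          integrable_stdf.integrableOn integrable_stdf.integrableOn, Phi_eq]
        ring
      have hbd : ∀ t ∈ Set.Ioc a b, stdf t ≤ 1 := by
        intro t _
        have h1 : Real.exp (-t ^ 2 / 2) ≤ 1 := by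
          rw [Real.exp_le_one_iff]
          nlinarith [sq_nonneg t]
        have h2 : (1:ℝ) ≤ Real.sqrt (2 * Real.pi) := by
          rw [show (1:ℝ) = Real.sqrt 1 by simp]
          apply Real.sqrt_le_sqrt
          nlinarith [Real.pi_gt_three]
        calc stdf t ≤ 1 / 1 := by
              apply div_le_div₀ (by norm_num) h1 (by norm_num) h2
          _ = 1 := by norm_num
      calc Phi b - Phi a = ∫ t in Set.Ioc a b, stdf t := hsplit
        _ ≤ ∫ t in Set.Ioc a b, (1:ℝ) := by
            apply setIntegral_mono_on integrable_stdf.integrableOn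
              (integrableOn_const (by rw [Real.volume_Ioc]; exact ENNReal.ofReal_ne_top))
              measurableSet_Ioc hbd
        _ ≤ b - a := by
            rw [setIntegral_const, smul_eq_mul, mul_one, measureReal_def, Real.volume_Ioc,
              ENNReal.toReal_ofReal (sub_nonneg.2 hab)]
    apply LipschitzWith.of_dist_le_mul
    intro a b
    rw [NNReal.coe_one, one_mul, Real.dist_eq, Real.dist_eq]
    rcases le_total a b with h | h
    · rw [abs_sub_comm, abs_of_nonneg (sub_nonneg.2 (Phi_mono h)),
        abs_sub_comm, abs_of_nonneg (sub_nonneg.2 h)]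
      exact key a b h
    · rw [abs_of_nonneg (sub_nonneg.2 (Phi_mono h)), abs_of_nonneg (sub_nonneg.2 h)]
      exact key b a h
  exact hL.continuous


section Alpha
variable {α : ℝ}

lemma Phi_surj (hα : α ∈ Set.Ioo (0:ℝ) 1) : ∃ x, Phi x = 1 - α / 2 := by
  obtain ⟨hα0, hα1⟩ := hα
  obtain ⟨M, hM⟩ := (Phi_tendsto_one.eventually (eventually_ge_nhds
    (show 1 - α/2 < 1 by linarith))).exists
  have hb : Phi 0 ≤ 1 - α/2 := by rw [Phi_zero]; linarith
  have hMb : 1 - α/2 ≤ Phi (max M 0) := le_trans hM (Phi_mono (le_max_left _ _))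
  obtain ⟨x, _, hx⟩ := intermediate_value_Icc (le_max_right M 0)
    Phi_continuous.continuousOn ⟨hb, hMb⟩
  exact ⟨x, hx⟩

lemma Phi_PhiInv (hα : α ∈ Set.Ioo (0:ℝ) 1) : Phi (PhiInv (1 - α / 2)) = 1 - α / 2 :=
  Function.invFun_eq (Phi_surj hα)

lemma PhiInv_pos (hα : α ∈ Set.Ioo (0:ℝ) 1) : 0 < PhiInv (1 - α / 2) := by
  by_contra h
  push_neg at h
  have := Phi_mono h
  rw [Phi_PhiInv hα, Phi_zero] at this
  linarith [hα.2]

lemma gauss_Iic (x : ℝ) : gaussianReal 0 1 (Set.Iic x) = ENNReal.ofReal (Phi x) := by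
  rw [gauss_apply, Phi_eq]

lemma gauss_Iio (x : ℝ) : gaussianReal 0 1 (Set.Iio x) = ENNReal.ofReal (Phi x) := by
  rw [gauss_apply, Phi_eq, MeasureTheory.integral_Iic_eq_integral_Iio]

lemma gauss_Ici (x : ℝ) : gaussianReal 0 1 (Set.Ici x) = ENNReal.ofReal (1 - Phi x) := by
  have h0 : 0 ≤ Phi x := by
    rw [Phi_eq]; exact setIntegral_nonneg measurableSet_Iic fun t _ => stdf_nonneg t
  rw [← Set.compl_Iio, measure_compl measurableSet_Iio (measure_ne_top _ _), gauss_Iio,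
    measure_univ, ← ENNReal.ofReal_one, ← ENNReal.ofReal_sub _ h0]

lemma gauss_tail (hα : α ∈ Set.Ioo (0: ℝ) 1) :
    (gaussianReal 0 1 {z : ℝ | PhiInv (1 - α / 2) ≤ |z|}).toReal = α := by
  set c := PhiInv (1 - α / 2) with hcdef
  have hc : Phi c = 1 - α / 2 := Phi_PhiInv hα
  have hc0 : 0 < c := PhiInv_pos hα
  have hset : {z : ℝ | c ≤ |z|} = Set.Iic (-c) ∪ Set.Ici c := by
    ext z
    simp only [Set.mem_setOf_eq, Set.mem_union, Set.mem_Iic, Set.mem_Ici, le_abs]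
    constructor
    · rintro (h | h); exacts [Or.inr h, Or.inl (by linarith)]
    · rintro (h | h); exacts [Or.inr (by linarith), Or.inl h]
  have hdisj : Disjoint (Set.Iic (-c)) (Set.Ici c) :=
    Set.Iic_disjoint_Ici.2 (by linarith)
  rw [hset, measure_union hdisj measurableSet_Ici, gauss_Iic, gauss_Ici, Phi_neg, hc,
    ← ENNReal.ofReal_add (by linarith [hα.1]) (by linarith [hα.1])]
  rw [show (1 - (1 - α / 2) + (1 - (1 - α / 2))) = α by ring,
    ENNReal.toReal_ofReal (le_of_lt hα.1)]

lemma gauss_mid (hα : α ∈ Set.Ioo (0:ℝ) 1) :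
    (gaussianReal 0 1 {z : ℝ | |z| ≤ PhiInv (1 - α / 2)}).toReal = 1 - α := by
  set c := PhiInv (1 - α / 2) with hcdef
  have hc : Phi c = 1 - α / 2 := Phi_PhiInv hα
  have hc0 : 0 < c := PhiInv_pos hα
  have hset : {z : ℝ | |z| ≤ c} = Set.Iic c \ Set.Iio (-c) := by
    ext z
    simp only [Set.mem_setOf_eq, Set.mem_diff, Set.mem_Iic, Set.mem_Iio, abs_le, not_lt]
    tauto
  have hsub : Set.Iio (-c) ⊆ Set.Iic c := fun z hz => by
    simp only [Set.mem_Iio] at hz; simp only [Set.mem_Iic]; linarith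
  rw [hset, measure_diff hsub
    measurableSet_Iio.nullMeasurableSet (measure_ne_top _ _), gauss_Iic, gauss_Iio, Phi_neg, hc,
    ← ENNReal.ofReal_sub _ (by linarith [hα.1]),
    ENNReal.toReal_ofReal (by linarith [hα.2])]
  ring

end Alpha



noncomputable def clamp01 (t : ℝ) : ℝ := min (max t 0) 1

lemma clamp01_nonneg (t : ℝ) : 0 ≤ clamp01 t := le_min (le_max_right t 0) zero_le_one
lemma clamp01_le_one (t : ℝ) : clamp01 t ≤ 1 := min_le_right _ _
lemma clamp01_of_one_le {t : ℝ} (h : 1 ≤ t) : clamp01 t = 1 := by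
  rw [clamp01, max_eq_left (by linarith), min_eq_right h]
lemma clamp01_of_nonpos {t : ℝ} (h : t ≤ 0) : clamp01 t = 0 := by
  rw [clamp01, max_eq_right h, min_eq_left zero_le_one]
@[continuity, fun_prop]
lemma clamp01_continuous : Continuous clamp01 :=
  ((continuous_id.max continuous_const).min continuous_const)

/-- limit of `clamp01 (n*t+1)` -/
lemma tendsto_clampA (t : ℝ) :
    Tendsto (fun n : ℕ => clamp01 (n * t + 1)) atTop (nhds (if 0 ≤ t then 1 else 0)) := by
  by_cases h : 0 ≤ t
  · rw [if_pos h]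
    have : ∀ n : ℕ, clamp01 ((n : ℝ) * t + 1) = 1 := fun n =>
      clamp01_of_one_le (by nlinarith [Nat.cast_nonneg (α := ℝ) n])
    simpa [this] using tendsto_const_nhds
  · rw [if_neg h]
    push_neg at h
    apply Tendsto.congr' _ tendsto_const_nhds
    obtain ⟨N, hN⟩ := exists_nat_ge (1 / (-t))
    filter_upwards [eventually_ge_atTop N] with n hn
    have hn' : (1:ℝ) / (-t) ≤ (n : ℝ) := le_trans hN (by exact_mod_cast hn)
    have : (n:ℝ) * t + 1 ≤ 0 := by
      have h2 : (1:ℝ) ≤ (n:ℝ) * (-t) := by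
        rw [div_le_iff₀ (by linarith)] at hn'
        linarith
      linarith
    exact (clamp01_of_nonpos this).symm

/-- limit of `clamp01 (1 - n*t)` -/
lemma tendsto_clampB (t : ℝ) :
    Tendsto (fun n : ℕ => clamp01 (1 - n * t)) atTop (nhds (if t ≤ 0 then 1 else 0)) := by
  by_cases h : t ≤ 0
  · rw [if_pos h]
    have : ∀ n : ℕ, clamp01 (1 - (n : ℝ) * t) = 1 := fun n =>
      clamp01_of_one_le (by nlinarith [Nat.cast_nonneg (α := ℝ) n])
    simpa [this] using tendsto_const_nhds
  · rw [if_neg h]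
    push_neg at h
    apply Tendsto.congr' _ tendsto_const_nhds
    obtain ⟨N, hN⟩ := exists_nat_ge (1 / t)
    filter_upwards [eventually_ge_atTop N] with n hn
    have hn' : (1:ℝ) / t ≤ (n : ℝ) := le_trans hN (by exact_mod_cast hn)
    have : 1 - (n:ℝ) * t ≤ 0 := by
      rw [div_le_iff₀ h] at hn'
      linarith
    exact (clamp01_of_nonpos this).symm

/-- DCT towards the measure of a set. -/
lemma dct_aux {X : Type*} [MeasurableSpace X] [TopologicalSpace X] [OpensMeasurableSpace X]
    {ν : Measure X} [IsProbabilityMeasure ν]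
    {S : Set X} (hS : MeasurableSet S) {F : ℕ → X → ℝ}
    (hmeas : ∀ n, Continuous (F n))
    (hb : ∀ n x, |F n x| ≤ 1)
    (hlim : ∀ x, Tendsto (fun n => F n x) atTop (nhds (S.indicator (fun _ => (1:ℝ)) x))) :
    Tendsto (fun n => ∫ x, F n x ∂ν) atTop (nhds ((ν S).toReal)) := by
  have h := MeasureTheory.tendsto_integral_of_dominated_convergence (F := fun n x => F n x)
    (bound := fun _ => (1:ℝ)) (fun n => (hmeas n).aestronglyMeasurable)
    (integrable_const (μ := ν) 1)
    (fun n => ae_of_all _ fun x => by rw [Real.norm_eq_abs]; exact hb n x)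
    (ae_of_all _ hlim)
  have heq : ∫ a, S.indicator (fun _ => (1:ℝ)) a ∂ν = (ν S).toReal := by
    rw [show (fun _ : X => (1:ℝ)) = (1 : X → ℝ) from rfl]
    exact MeasureTheory.integral_indicator_one hS
  rw [heq] at h
  exact h

/-- counting bound -/
lemma ncard_le_sum {p : ℕ} (P : Fin p → Prop) (F : Fin p → ℝ) (h0 : ∀ i, 0 ≤ F i)
    (h1 : ∀ i, P i → 1 ≤ F i) : ({i | P i}.ncard : ℝ) ≤ ∑ i, F i := by
  classical
  have hcard : {i | P i}.ncard = (Finset.univ.filter P).card := by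
    rw [← Set.ncard_coe_finset]
    congr 1
    ext i
    simp
  rw [hcard]
  calc ((Finset.univ.filter P).card : ℝ) = ∑ i ∈ Finset.univ.filter P, 1 := by simp
    _ ≤ ∑ i ∈ Finset.univ.filter P, F i :=
        Finset.sum_le_sum (fun i hi => h1 i (by simpa using hi))
    _ ≤ ∑ i, F i := Finset.sum_le_sum_of_subset_of_nonneg (Finset.subset_univ _)
        (fun i _ _ => h0 i)

lemma ncard_split {p : ℕ} (P Q : Fin p → Prop) :
    ({i | P i ∧ Q i}.ncard : ℝ) + ({i | P i ∧ ¬ Q i}.ncard : ℝ) = ({i | P i}.ncard : ℝ) := by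
  classical
  rw [← Nat.cast_add]
  norm_cast
  rw [← Set.ncard_union_eq (by
    rw [Set.disjoint_left]
    rintro i ⟨_, hq⟩ ⟨_, hnq⟩
    exact hnq hq) (Set.toFinite _) (Set.toFinite _)]
  congr 1
  ext i
  by_cases h : Q i <;> simp [h]



lemma nu_comp (μ : Measure (ℝ × ℝ)) [IsProbabilityMeasure μ]
    (hpos : μ {q : ℝ × ℝ | q.2 ≤ 0} = 0) (τ : ℝ)
    (B : Set ℝ) (hB : MeasurableSet B)
    (S : Set (ℝ × ℝ × ℝ)) (hS : MeasurableSet S)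
    (hiff : ∀ x0 u0 z : ℝ, 0 < u0 →
      ((x0, x0 + τ * Real.sqrt u0 * z, u0) ∈ S ↔ (x0 = 0 ∧ z ∈ B))) :
    Measure.map (fun q : (ℝ × ℝ) × ℝ => (q.1.1, q.1.1 + τ * Real.sqrt q.1.2 * q.2, q.1.2))
      (μ.prod (gaussianReal 0 1)) S = μ {q : ℝ × ℝ | q.1 = 0} * gaussianReal 0 1 B := by
  set T := fun q : (ℝ × ℝ) × ℝ => (q.1.1, q.1.1 + τ * Real.sqrt q.1.2 * q.2, q.1.2) with hTdef
  have hT : Measurable T := by fun_prop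
  set ρ := μ.prod (gaussianReal 0 1) with hρdef
  have hnullset : MeasurableSet {q : ℝ × ℝ | q.2 ≤ 0} := by
    exact measurableSet_le measurable_snd measurable_const
  have hnull : ρ ((fun q : (ℝ × ℝ) × ℝ => q.1) ⁻¹' {q : ℝ × ℝ | q.2 ≤ 0}) = 0 := by
    rw [← Measure.map_apply measurable_fst hnullset, Measure.map_fst_prod, measure_univ,
      one_smul, hpos]
  have hae : ∀ᵐ q ∂ρ, 0 < q.1.2 := by
    rw [ae_iff]
    convert hnull using 2
    ext q
    simp [not_lt]
  have haeeq : T ⁻¹' S =ᵐ[ρ] (({q : ℝ × ℝ | q.1 = 0 ∧ 0 < q.2}) ×ˢ B) := by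
    rw [Filter.eventuallyEq_set]
    filter_upwards [hae] with q hq
    simp only [Set.mem_preimage, Set.mem_prod, Set.mem_setOf_eq]
    rw [hiff q.1.1 q.1.2 q.2 hq]
    tauto
  rw [Measure.map_apply hT hS, measure_congr haeeq, Measure.prod_prod]
  congr 1
  apply le_antisymm
  · exact measure_mono (fun q hq => hq.1)
  · have hsub : {q : ℝ × ℝ | q.1 = 0} ⊆
        {q : ℝ × ℝ | q.1 = 0 ∧ 0 < q.2} ∪ {q : ℝ × ℝ | q.2 ≤ 0} := by
      intro q hq
      by_cases h : 0 < q.2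
      · exact Or.inl ⟨hq, h⟩
      · exact Or.inr (not_lt.1 h)
    calc μ {q : ℝ × ℝ | q.1 = 0} ≤ μ ({q : ℝ × ℝ | q.1 = 0 ∧ 0 < q.2} ∪ {q : ℝ × ℝ | q.2 ≤ 0}) :=
          measure_mono hsub
      _ ≤ μ {q : ℝ × ℝ | q.1 = 0 ∧ 0 < q.2} + μ {q : ℝ × ℝ | q.2 ≤ 0} := measure_union_le _ _
      _ = μ {q : ℝ × ℝ | q.1 = 0 ∧ 0 < q.2} := by rw [hpos, add_zero]

noncomputable def psi (c τ y u : ℝ) : ℝ := |y| - c * (τ * Real.sqrt u)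

def S1 (c τ : ℝ) : Set (ℝ × ℝ × ℝ) := {v | v.1 = 0 ∧ 0 ≤ psi c τ v.2.1 v.2.2 ∧ 0 ≤ v.2.2}
def S2 (c τ : ℝ) : Set (ℝ × ℝ × ℝ) := {v | v.1 = 0 ∧ (v.2.2 ≤ 0 ∨ psi c τ v.2.1 v.2.2 ≤ 0)}

lemma psi_continuous (c τ : ℝ) : Continuous fun v : ℝ × ℝ × ℝ => psi c τ v.2.1 v.2.2 := by
  unfold psi
  fun_prop

lemma measurableSet_S1 (c τ : ℝ) : MeasurableSet (S1 c τ) := by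
  have h1 : IsClosed {v : ℝ × ℝ × ℝ | v.1 = 0} := isClosed_eq continuous_fst continuous_const
  have h2 : IsClosed {v : ℝ × ℝ × ℝ | 0 ≤ psi c τ v.2.1 v.2.2} :=
    isClosed_le continuous_const (psi_continuous c τ)
  have h3 : IsClosed {v : ℝ × ℝ × ℝ | 0 ≤ v.2.2} :=
    isClosed_le continuous_const (continuous_snd.snd)
  exact ((h1.inter (h2.inter h3)).measurableSet).congr rfl

lemma measurableSet_S2 (c τ : ℝ) : MeasurableSet (S2 c τ) := by
  have h1 : IsClosed {v : ℝ × ℝ × ℝ | v.1 = 0} := isClosed_eq continuous_fst continuous_const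
  have h2 : IsClosed {v : ℝ × ℝ × ℝ | v.2.2 ≤ 0} :=
    isClosed_le (continuous_snd.snd) continuous_const
  have h3 : IsClosed {v : ℝ × ℝ × ℝ | psi c τ v.2.1 v.2.2 ≤ 0} :=
    isClosed_le (psi_continuous c τ) continuous_const
  exact ((h1.inter (h2.union h3)).measurableSet).congr rfl

noncomputable def Ffun (c τ : ℝ) (n : ℕ) (v : ℝ × ℝ × ℝ) : ℝ :=
  clamp01 (1 - n * |v.1|) * (clamp01 (n * psi c τ v.2.1 v.2.2 + 1) * clamp01 (n * v.2.2 + 1))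

noncomputable def F'fun (c τ : ℝ) (n : ℕ) (v : ℝ × ℝ × ℝ) : ℝ :=
  clamp01 (1 - n * |v.1|) *
    max (clamp01 (1 - n * v.2.2)) (clamp01 (1 - n * psi c τ v.2.1 v.2.2))

lemma Ffun_continuous (c τ : ℝ) (n : ℕ) : Continuous (Ffun c τ n) := by
  unfold Ffun
  have h := psi_continuous c τ
  apply Continuous.mul
  · exact clamp01_continuous.comp (by fun_prop)
  · exact (clamp01_continuous.comp (by fun_prop)).mul (clamp01_continuous.comp (by fun_prop))

lemma F'fun_continuous (c τ : ℝ) (n : ℕ) : Continuous (F'fun c τ n) := by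
  unfold F'fun
  have h := psi_continuous c τ
  apply Continuous.mul
  · exact clamp01_continuous.comp (by fun_prop)
  · exact Continuous.max (clamp01_continuous.comp (by fun_prop))
      (clamp01_continuous.comp (by fun_prop))

lemma Ffun_nonneg (c τ : ℝ) (n : ℕ) (v : ℝ × ℝ × ℝ) : 0 ≤ Ffun c τ n v :=
  mul_nonneg (clamp01_nonneg _) (mul_nonneg (clamp01_nonneg _) (clamp01_nonneg _))

lemma Ffun_le_one (c τ : ℝ) (n : ℕ) (v : ℝ × ℝ × ℝ) : Ffun c τ n v ≤ 1 :=
  mul_le_one₀ (clamp01_le_one _)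
    (mul_nonneg (clamp01_nonneg _) (clamp01_nonneg _))
    (mul_le_one₀ (clamp01_le_one _) (clamp01_nonneg _) (clamp01_le_one _))

lemma F'fun_nonneg (c τ : ℝ) (n : ℕ) (v : ℝ × ℝ × ℝ) : 0 ≤ F'fun c τ n v :=
  mul_nonneg (clamp01_nonneg _) (le_trans (clamp01_nonneg _) (le_max_left _ _))

lemma F'fun_le_one (c τ : ℝ) (n : ℕ) (v : ℝ × ℝ × ℝ) : F'fun c τ n v ≤ 1 :=
  mul_le_one₀ (clamp01_le_one _)
    (le_trans (clamp01_nonneg _) (le_max_left _ _))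
    (max_le (clamp01_le_one _) (clamp01_le_one _))

lemma Ffun_lim (c τ : ℝ) (v : ℝ × ℝ × ℝ) :
    Tendsto (fun n => Ffun c τ n v) atTop
      (nhds ((S1 c τ).indicator (fun _ => (1:ℝ)) v)) := by
  have h1 := tendsto_clampB |v.1|
  have h2 := tendsto_clampA (psi c τ v.2.1 v.2.2)
  have h3 := tendsto_clampA v.2.2
  have h := h1.mul (h2.mul h3)
  have hL : (if |v.1| ≤ 0 then (1:ℝ) else 0) *
      ((if 0 ≤ psi c τ v.2.1 v.2.2 then (1:ℝ) else 0) * (if 0 ≤ v.2.2 then (1:ℝ) else 0)) =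
      (S1 c τ).indicator (fun _ => (1:ℝ)) v := by
    by_cases hx : v.1 = 0 <;> by_cases hp : 0 ≤ psi c τ v.2.1 v.2.2 <;>
      by_cases hu : 0 ≤ v.2.2 <;>
      simp [Set.indicator, S1, hx, hp, hu, abs_nonpos_iff]
  rw [← hL]
  exact h

lemma F'fun_lim (c τ : ℝ) (v : ℝ × ℝ × ℝ) :
    Tendsto (fun n => F'fun c τ n v) atTop
      (nhds ((S2 c τ).indicator (fun _ => (1:ℝ)) v)) := by
  have h1 := tendsto_clampB |v.1|
  have h2 := tendsto_clampB v.2.2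
  have h3 := tendsto_clampB (psi c τ v.2.1 v.2.2)
  have h := h1.mul (h2.max h3)
  have hL : (if |v.1| ≤ 0 then (1:ℝ) else 0) *
      max (if v.2.2 ≤ 0 then (1:ℝ) else 0) (if psi c τ v.2.1 v.2.2 ≤ 0 then (1:ℝ) else 0) =
      (S2 c τ).indicator (fun _ => (1:ℝ)) v := by
    by_cases hx : v.1 = 0 <;> by_cases hp : psi c τ v.2.1 v.2.2 ≤ 0 <;>
      by_cases hu : v.2.2 ≤ 0 <;>
      simp [Set.indicator, S2, hx, hp, hu, abs_nonpos_iff]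
  rw [← hL]
  exact h

lemma Ffun_eq_one {c τ : ℝ} (hc0 : 0 < c) (hτ : 0 < τ) (n : ℕ) (v : ℝ × ℝ × ℝ)
    (hx : v.1 = 0) (hrej : c ≤ |v.2.1| / (τ * Real.sqrt v.2.2)) : 1 ≤ Ffun c τ n v := by
  have hsq : 0 < Real.sqrt v.2.2 := by
    rcases lt_or_ge 0 (Real.sqrt v.2.2) with h | h
    · exact h
    · exfalso
      have h0 : Real.sqrt v.2.2 = 0 := le_antisymm h (Real.sqrt_nonneg _)
      rw [h0, mul_zero, div_zero] at hrej
      linarith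
  have hu : 0 < v.2.2 := Real.sqrt_pos.1 hsq
  have hs : 0 < τ * Real.sqrt v.2.2 := mul_pos hτ hsq
  have hpsi : 0 ≤ psi c τ v.2.1 v.2.2 := by
    rw [le_div_iff₀ hs] at hrej
    unfold psi
    linarith
  unfold Ffun
  rw [hx, abs_zero, mul_zero, sub_zero, clamp01_of_one_le le_rfl,
    clamp01_of_one_le (by nlinarith [Nat.cast_nonneg (α := ℝ) n]),
    clamp01_of_one_le (by nlinarith [Nat.cast_nonneg (α := ℝ) n])]
  norm_num

lemma F'fun_eq_one {c τ : ℝ} (hc0 : 0 < c) (hτ : 0 < τ) (n : ℕ) (v : ℝ × ℝ × ℝ)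
    (hx : v.1 = 0) (hrej : ¬ c ≤ |v.2.1| / (τ * Real.sqrt v.2.2)) : 1 ≤ F'fun c τ n v := by
  unfold F'fun
  rw [hx, abs_zero, mul_zero, sub_zero, clamp01_of_one_le le_rfl, one_mul]
  rcases le_or_gt v.2.2 0 with hu | hu
  · refine le_trans ?_ (le_max_left _ _)
    rw [clamp01_of_one_le (by nlinarith [Nat.cast_nonneg (α := ℝ) n])]
  · have hsq : 0 < Real.sqrt v.2.2 := Real.sqrt_pos.2 hu
    have hs : 0 < τ * Real.sqrt v.2.2 := mul_pos hτ hsq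
    push_neg at hrej
    rw [div_lt_iff₀ hs] at hrej
    have hpsi : psi c τ v.2.1 v.2.2 < 0 := by unfold psi; nlinarith
    refine le_trans ?_ (le_max_right _ _)
    rw [clamp01_of_one_le (by nlinarith [Nat.cast_nonneg (α := ℝ) n])]


/-- Theorem (asymptotic size of the SDL test): assume the standard distributional limit, i.e.
the empirical distribution of `(θ_{0,i}, θ̂ᵘ_i, (Σ⁻¹)_{ii})_{i ≤ p}` converges weakly, almost
surely, to the law of `(Θ₀, Θ₀ + τ √Υ Z, Υ)` with `Z ~ N(0,1)` independent of `(Θ₀, Υ)`,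
`τ > 0`, `Υ > 0` a.s., and that the fraction of null coordinates converges to
`P(Θ₀ = 0) > 0`.  Then, almost surely, the fraction of null coordinates rejected by the SDL
test at level `α` converges to `α`. -/
theorem sdl_test_size {Ω : Type*} [MeasurableSpace Ω] (P : MeasureTheory.Measure Ω)
    [MeasureTheory.IsProbabilityMeasure P]
    (θ0 : (p : ℕ) → Fin p → ℝ) (ups : (p : ℕ) → Fin p → ℝ)
    (θhat : Ω → (p : ℕ) → Fin p → ℝ)
    (τ : ℝ) (hτ : 0 < τ) (α : ℝ) (hα : α ∈ Set.Ioo (0 : ℝ) 1)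
    (μ₀law : MeasureTheory.Measure (ℝ × ℝ)) [MeasureTheory.IsProbabilityMeasure μ₀law]
    (hpos : μ₀law {q : ℝ × ℝ | q.2 ≤ 0} = 0)
    (ν : MeasureTheory.Measure (ℝ × ℝ × ℝ))
    (hν : ν = MeasureTheory.Measure.map
        (fun q : (ℝ × ℝ) × ℝ => (q.1.1, q.1.1 + τ * Real.sqrt q.1.2 * q.2, q.1.2))
        (μ₀law.prod (gaussianReal 0 1)))
    (hconv : ∀ᵐ ω ∂P, ∀ f : BoundedContinuousFunction (ℝ × ℝ × ℝ) ℝ,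
      Tendsto (fun p : ℕ => (1 / (p : ℝ)) * ∑ i, f (θ0 p i, θhat ω p i, ups p i))
        atTop (nhds (∫ v, f v ∂ν)))
    (hnullpos : 0 < (μ₀law {q : ℝ × ℝ | q.1 = 0}).toReal)
    (hnullfrac : Tendsto (fun p : ℕ => ({i : Fin p | θ0 p i = 0}.ncard : ℝ) / p) atTop
      (nhds (μ₀law {q : ℝ × ℝ | q.1 = 0}).toReal)) :
    ∀ᵐ ω ∂P, Tendsto
      (fun p : ℕ =>
        ({i : Fin p | θ0 p i = 0 ∧
            PhiInv (1 - α / 2) ≤ |θhat ω p i| / (τ * Real.sqrt (ups p i))}.ncard : ℝ) /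
          ({i : Fin p | θ0 p i = 0}.ncard : ℝ))
      atTop (nhds α) := by
  have hα0 := hα.1
  have hα1 := hα.2
  set c := PhiInv (1 - α / 2) with hcdef
  have hc0 : 0 < c := PhiInv_pos hα
  set pi0 := (μ₀law {q : ℝ × ℝ | q.1 = 0}).toReal with hπdef
  have hπ : 0 < pi0 := hnullpos
  subst hν
  have hT : Measurable (fun q : (ℝ × ℝ) × ℝ =>
      (q.1.1, q.1.1 + τ * Real.sqrt q.1.2 * q.2, q.1.2)) := by fun_prop
  haveI hprob : IsProbabilityMeasure (Measure.map
      (fun q : (ℝ × ℝ) × ℝ => (q.1.1, q.1.1 + τ * Real.sqrt q.1.2 * q.2, q.1.2))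
      (μ₀law.prod (gaussianReal 0 1))) := Measure.isProbabilityMeasure_map hT.aemeasurable
  -- measure of S1
  have hν₁ : Measure.map
      (fun q : (ℝ × ℝ) × ℝ => (q.1.1, q.1.1 + τ * Real.sqrt q.1.2 * q.2, q.1.2))
      (μ₀law.prod (gaussianReal 0 1)) (S1 c τ)
      = μ₀law {q : ℝ × ℝ | q.1 = 0} * gaussianReal 0 1 {z : ℝ | c ≤ |z|} := by
    apply nu_comp μ₀law hpos τ _
      ((isClosed_le continuous_const continuous_abs).measurableSet) _ (measurableSet_S1 c τ)
    intro x0 u0 z hu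
    have hsq : 0 < Real.sqrt u0 := Real.sqrt_pos.2 hu
    have hs : 0 < τ * Real.sqrt u0 := mul_pos hτ hsq
    simp only [S1, Set.mem_setOf_eq]
    constructor
    · rintro ⟨hx, hp, -⟩
      refine ⟨hx, ?_⟩
      unfold psi at hp
      rw [hx, zero_add, abs_mul, abs_of_pos hs] at hp
      exact (mul_le_mul_iff_right₀ hs).1 (by nlinarith)
    · rintro ⟨hx, hz⟩
      refine ⟨hx, ?_, le_of_lt hu⟩
      unfold psi
      rw [hx, zero_add, abs_mul, abs_of_pos hs]
      nlinarith
  have hν₂ : Measure.map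
      (fun q : (ℝ × ℝ) × ℝ => (q.1.1, q.1.1 + τ * Real.sqrt q.1.2 * q.2, q.1.2))
      (μ₀law.prod (gaussianReal 0 1)) (S2 c τ)
      = μ₀law {q : ℝ × ℝ | q.1 = 0} * gaussianReal 0 1 {z : ℝ | |z| ≤ c} := by
    apply nu_comp μ₀law hpos τ _
      ((isClosed_le continuous_abs continuous_const).measurableSet) _ (measurableSet_S2 c τ)
    intro x0 u0 z hu
    have hsq : 0 < Real.sqrt u0 := Real.sqrt_pos.2 hu
    have hs : 0 < τ * Real.sqrt u0 := mul_pos hτ hsq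
    simp only [S2, Set.mem_setOf_eq]
    constructor
    · rintro ⟨hx, hp | hp⟩
      · exact absurd hp (not_le.2 hu)
      · refine ⟨hx, ?_⟩
        unfold psi at hp
        rw [hx, zero_add, abs_mul, abs_of_pos hs] at hp
        exact (mul_le_mul_iff_right₀ hs).1 (by nlinarith)
    · rintro ⟨hx, hz⟩
      refine ⟨hx, Or.inr ?_⟩
      unfold psi
      rw [hx, zero_add, abs_mul, abs_of_pos hs]
      nlinarith
  have hI₁ : ((Measure.map
      (fun q : (ℝ × ℝ) × ℝ => (q.1.1, q.1.1 + τ * Real.sqrt q.1.2 * q.2, q.1.2))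
      (μ₀law.prod (gaussianReal 0 1))) (S1 c τ)).toReal = pi0 * α := by
    rw [hν₁, ENNReal.toReal_mul, hπdef, hcdef, gauss_tail hα]
  have hI₂ : ((Measure.map
      (fun q : (ℝ × ℝ) × ℝ => (q.1.1, q.1.1 + τ * Real.sqrt q.1.2 * q.2, q.1.2))
      (μ₀law.prod (gaussianReal 0 1))) (S2 c τ)).toReal = pi0 * (1 - α) := by
    rw [hν₂, ENNReal.toReal_mul, hπdef, hcdef, gauss_mid hα]
  have hIF : Tendsto (fun n => ∫ v, Ffun c τ n v
      ∂(Measure.map (fun q : (ℝ × ℝ) × ℝ => (q.1.1, q.1.1 + τ * Real.sqrt q.1.2 * q.2, q.1.2))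
        (μ₀law.prod (gaussianReal 0 1)))) atTop (nhds (pi0 * α)) := by
    have h := dct_aux (ν := (Measure.map (fun q : (ℝ × ℝ) × ℝ => (q.1.1, q.1.1 + τ * Real.sqrt q.1.2 * q.2, q.1.2))
        (μ₀law.prod (gaussianReal 0 1)))) (measurableSet_S1 c τ) (Ffun_continuous c τ)
      (fun n v => abs_le.2 ⟨by linarith [Ffun_nonneg c τ n v], Ffun_le_one c τ n v⟩)
      (Ffun_lim c τ)
    rwa [hI₁] at h
  have hIF' : Tendsto (fun n => ∫ v, F'fun c τ n v
      ∂(Measure.map (fun q : (ℝ × ℝ) × ℝ => (q.1.1, q.1.1 + τ * Real.sqrt q.1.2 * q.2, q.1.2))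
        (μ₀law.prod (gaussianReal 0 1)))) atTop (nhds (pi0 * (1 - α))) := by
    have h := dct_aux (ν := (Measure.map (fun q : (ℝ × ℝ) × ℝ => (q.1.1, q.1.1 + τ * Real.sqrt q.1.2 * q.2, q.1.2))
        (μ₀law.prod (gaussianReal 0 1)))) (measurableSet_S2 c τ) (F'fun_continuous c τ)
      (fun n v => abs_le.2 ⟨by linarith [F'fun_nonneg c τ n v], F'fun_le_one c τ n v⟩)
      (F'fun_lim c τ)
    rwa [hI₂] at h
  -- bounded continuous versions
  set Fb : ℕ → BoundedContinuousFunction (ℝ × ℝ × ℝ) ℝ := fun n =>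
    ⟨⟨Ffun c τ n, Ffun_continuous c τ n⟩, 1, fun x y => by
      rw [Real.dist_eq, abs_le]
      constructor
      · linarith [Ffun_nonneg c τ n x, Ffun_le_one c τ n y]
      · linarith [Ffun_nonneg c τ n y, Ffun_le_one c τ n x]⟩ with hFbdef
  set Fb' : ℕ → BoundedContinuousFunction (ℝ × ℝ × ℝ) ℝ := fun n =>
    ⟨⟨F'fun c τ n, F'fun_continuous c τ n⟩, 1, fun x y => by
      rw [Real.dist_eq, abs_le]
      constructor
      · linarith [F'fun_nonneg c τ n x, F'fun_le_one c τ n y]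
      · linarith [F'fun_nonneg c τ n y, F'fun_le_one c τ n x]⟩ with hFb'def
  filter_upwards [hconv] with ω hω
  have key : Tendsto (fun p : ℕ => ({i : Fin p | θ0 p i = 0 ∧
      c ≤ |θhat ω p i| / (τ * Real.sqrt (ups p i))}.ncard : ℝ) / p) atTop
      (nhds (pi0 * α)) := by
    rw [Metric.tendsto_atTop]
    intro ε hε
    have hε4 : 0 < ε / 4 := by linarith
    obtain ⟨n₁, hn₁⟩ := (hIF.eventually_lt_const (show pi0 * α < pi0 * α + ε / 4 by linarith)).exists
    obtain ⟨n₂, hn₂⟩ := (hIF'.eventually_lt_const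
      (show pi0 * (1 - α) < pi0 * (1 - α) + ε / 4 by linarith)).exists
    have hA' : Tendsto (fun p : ℕ =>
        (1 / (p : ℝ)) * ∑ i, Ffun c τ n₁ (θ0 p i, θhat ω p i, ups p i)) atTop
        (nhds (∫ v, Ffun c τ n₁ v
          ∂(Measure.map (fun q : (ℝ × ℝ) × ℝ =>
              (q.1.1, q.1.1 + τ * Real.sqrt q.1.2 * q.2, q.1.2))
            (μ₀law.prod (gaussianReal 0 1))))) := hω (Fb n₁)
    have hB' : Tendsto (fun p : ℕ =>
        (1 / (p : ℝ)) * ∑ i, F'fun c τ n₂ (θ0 p i, θhat ω p i, ups p i)) atTop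
        (nhds (∫ v, F'fun c τ n₂ v
          ∂(Measure.map (fun q : (ℝ × ℝ) × ℝ =>
              (q.1.1, q.1.1 + τ * Real.sqrt q.1.2 * q.2, q.1.2))
            (μ₀law.prod (gaussianReal 0 1))))) := hω (Fb' n₂)
    have hA := hA'.eventually_lt_const
      (lt_trans hn₁ (show pi0 * α + ε / 4 < pi0 * α + ε / 2 by linarith))
    have hB := hB'.eventually_lt_const
      (lt_trans hn₂ (show pi0 * (1 - α) + ε / 4 < pi0 * (1 - α) + ε / 2 by linarith))
    have hC := hnullfrac.eventually (eventually_gt_nhds (show pi0 - ε / 4 < pi0 by linarith))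
    rw [Filter.eventually_atTop] at hA hB hC
    obtain ⟨PA, hPA⟩ := hA
    obtain ⟨PB, hPB⟩ := hB
    obtain ⟨PC, hPC⟩ := hC
    refine ⟨max PA (max PB PC), fun p hp => ?_⟩
    have hpA := hPA p (le_trans (le_max_left _ _) hp)
    have hpB := hPB p (le_trans (le_trans (le_max_left _ _) (le_max_right _ _)) hp)
    have hpC := hPC p (le_trans (le_trans (le_max_right _ _) (le_max_right _ _)) hp)
    have hp0 : (0:ℝ) ≤ 1 / p := by positivity
    -- upper bound for the rejected-null count
    have hsum1 : ({i : Fin p | θ0 p i = 0 ∧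
        c ≤ |θhat ω p i| / (τ * Real.sqrt (ups p i))}.ncard : ℝ) ≤
        ∑ i, Ffun c τ n₁ (θ0 p i, θhat ω p i, ups p i) :=
      ncard_le_sum _ _ (fun i => Ffun_nonneg c τ n₁ _)
        (fun i hi => Ffun_eq_one hc0 hτ n₁ _ hi.1 hi.2)
    have hsum2 : ({i : Fin p | θ0 p i = 0 ∧
        ¬ c ≤ |θhat ω p i| / (τ * Real.sqrt (ups p i))}.ncard : ℝ) ≤
        ∑ i, F'fun c τ n₂ (θ0 p i, θhat ω p i, ups p i) :=
      ncard_le_sum _ _ (fun i => F'fun_nonneg c τ n₂ _)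
        (fun i hi => F'fun_eq_one hc0 hτ n₂ _ hi.1 hi.2)
    have hub : ({i : Fin p | θ0 p i = 0 ∧
        c ≤ |θhat ω p i| / (τ * Real.sqrt (ups p i))}.ncard : ℝ) / p < pi0 * α + ε / 2 := by
      calc ({i : Fin p | θ0 p i = 0 ∧
          c ≤ |θhat ω p i| / (τ * Real.sqrt (ups p i))}.ncard : ℝ) / p
          = (1 / p) * ({i : Fin p | θ0 p i = 0 ∧
            c ≤ |θhat ω p i| / (τ * Real.sqrt (ups p i))}.ncard : ℝ) := by ring
        _ ≤ (1 / p) * ∑ i, Ffun c τ n₁ (θ0 p i, θhat ω p i, ups p i) :=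
            mul_le_mul_of_nonneg_left hsum1 hp0
        _ < pi0 * α + ε / 2 := hpA
    have hub' : ({i : Fin p | θ0 p i = 0 ∧
        ¬ c ≤ |θhat ω p i| / (τ * Real.sqrt (ups p i))}.ncard : ℝ) / p
        < pi0 * (1 - α) + ε / 2 := by
      calc ({i : Fin p | θ0 p i = 0 ∧
          ¬ c ≤ |θhat ω p i| / (τ * Real.sqrt (ups p i))}.ncard : ℝ) / p
          = (1 / p) * ({i : Fin p | θ0 p i = 0 ∧
            ¬ c ≤ |θhat ω p i| / (τ * Real.sqrt (ups p i))}.ncard : ℝ) := by ring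
        _ ≤ (1 / p) * ∑ i, F'fun c τ n₂ (θ0 p i, θhat ω p i, ups p i) :=
            mul_le_mul_of_nonneg_left hsum2 hp0
        _ < pi0 * (1 - α) + ε / 2 := hpB
    have hsplit : ({i : Fin p | θ0 p i = 0 ∧
        c ≤ |θhat ω p i| / (τ * Real.sqrt (ups p i))}.ncard : ℝ) / p
        = ({i : Fin p | θ0 p i = 0}.ncard : ℝ) / p
          - ({i : Fin p | θ0 p i = 0 ∧
            ¬ c ≤ |θhat ω p i| / (τ * Real.sqrt (ups p i))}.ncard : ℝ) / p := by
      rw [eq_sub_iff_add_eq, ← add_div,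
        ncard_split (fun i => θ0 p i = 0) (fun i => c ≤ |θhat ω p i| / (τ * Real.sqrt (ups p i)))]
    rw [Real.dist_eq, abs_lt]
    constructor
    · rw [hsplit]
      linarith
    · linarith
  -- conclude
  have hdiv := key.div hnullfrac (ne_of_gt hπ)
  have hev : (fun p : ℕ => (({i : Fin p | θ0 p i = 0 ∧
        c ≤ |θhat ω p i| / (τ * Real.sqrt (ups p i))}.ncard : ℝ) / p) /
        (({i : Fin p | θ0 p i = 0}.ncard : ℝ) / p)) =ᶠ[atTop]
      (fun p : ℕ => ({i : Fin p | θ0 p i = 0 ∧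
        c ≤ |θhat ω p i| / (τ * Real.sqrt (ups p i))}.ncard : ℝ) /
        ({i : Fin p | θ0 p i = 0}.ncard : ℝ)) := by
    filter_upwards [hnullfrac.eventually (eventually_gt_nhds (show pi0 / 2 < pi0 by linarith))] with p hq
    have hp0 : (p : ℝ) ≠ 0 := by
      intro h
      rw [h, div_zero] at hq
      linarith
    have hM0 : ({i : Fin p | θ0 p i = 0}.ncard : ℝ) ≠ 0 := by
      intro h
      rw [h, zero_div] at hq
      linarith
    field_simp
  have hval : pi0 * α / pi0 = α := by
    rw [mul_comm, mul_div_assoc, div_self (ne_of_gt hπ), mul_one]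
  rw [← hval]
  exact hdiv.congr' hev
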